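/- Let E be a bounded nonempty open subset of ℝ^d with center of gravity x̄_E and x_E ∈ ℝ^d. Then there exists an affine function w_E : ℝ^d → ℝ such that ∫_E w_E(x) dx = |E| and ∫_E x w_E(x) dx = |E| x_E. -/

import Mathlib

open MeasureTheory

/-- Existence of an affine weight function `w_E(x) = a + ξ·x` on a bounded nonempty
open set `E ⊂ ℝ^d` with `∫_E w_E = |E|` and `∫_E x w_E(x) dx = |E| x_E`. -/
theorem stmt1 (d : ℕ) (E : Set (EuclideanSpace ℝ (Fin d)))
    (hE : IsOpen E) (hne : E.Nonempty) (hb : Bornology.IsBounded E)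
    (xE : EuclideanSpace ℝ (Fin d)) :
    ∃ (a : ℝ) (ξ : EuclideanSpace ℝ (Fin d)),
      (∫ x in E, (a + (inner ℝ ξ x : ℝ))) = (volume E).toReal ∧
      (∫ x in E, (a + (inner ℝ ξ x : ℝ)) • x) = (volume E).toReal • xE := by
  classical
  have hcE : IsCompact (closure E) := hb.isCompact_closure
  have hint : ∀ {F : Type} [NormedAddCommGroup F] [NormedSpace ℝ F]
      (f : EuclideanSpace ℝ (Fin d) → F), Continuous f → IntegrableOn f E volume := by
    intro F _ _ f hf
    exact (hf.continuousOn.integrableOn_compact hcE).mono_set subset_closure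
  set w : ℝ × EuclideanSpace ℝ (Fin d) → EuclideanSpace ℝ (Fin d) → ℝ := fun p x => p.1 + inner ℝ p.2 x with hw
  have hwc : ∀ p : ℝ × EuclideanSpace ℝ (Fin d), Continuous (w p) := fun p =>
    continuous_const.add (Continuous.inner continuous_const continuous_id)
  have hint1 : ∀ p : ℝ × EuclideanSpace ℝ (Fin d), IntegrableOn (w p) E volume := fun p => hint _ (hwc p)
  have hint2 : ∀ p : ℝ × EuclideanSpace ℝ (Fin d), IntegrableOn (fun x => w p x • x) E volume := fun p =>
    hint _ ((hwc p).smul continuous_id)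
  set T : (ℝ × EuclideanSpace ℝ (Fin d)) →ₗ[ℝ] (ℝ × EuclideanSpace ℝ (Fin d)) :=
    { toFun := fun p => (∫ x in E, w p x, ∫ x in E, w p x • x),
      map_add' := by
        intro p q
        have h1 : ∀ x, w (p + q) x = w p x + w q x := by
          intro x; simp only [hw, Prod.fst_add, Prod.snd_add, inner_add_left]; ring
        have e1 : (∫ x in E, w (p + q) x) = (∫ x in E, (w p x + w q x)) := by
          simp only [h1]
        have e2 : (∫ x in E, w (p + q) x • x) = (∫ x in E, (w p x • x + w q x • x)) := by
          congr 1; funext x; rw [h1, add_smul]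
        refine Prod.ext ?_ ?_
        · simp only [e1]
          exact integral_add (hint1 p) (hint1 q)
        · simp only [e2]
          exact integral_add (hint2 p) (hint2 q)
      map_smul' := by
        intro c p
        have h1 : ∀ x, w (c • p) x = c * w p x := by
          intro x; simp only [hw, Prod.smul_fst, Prod.smul_snd, real_inner_smul_left, smul_eq_mul]; ring
        refine Prod.ext ?_ ?_
        · show (∫ x in E, w (c • p) x) = c • (∫ x in E, w p x)
          simp only [h1, smul_eq_mul]
          exact integral_const_mul c _
        · show (∫ x in E, w (c • p) x • x) = c • (∫ x in E, w p x • x)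
          have : ∀ x : EuclideanSpace ℝ (Fin d), w (c • p) x • x = c • (w p x • x) := by
            intro x; rw [h1, smul_smul]
          simp only [this]
          exact integral_smul c _ } with hT
  have hinj : Function.Injective T := by
    rw [← LinearMap.ker_eq_bot, LinearMap.ker_eq_bot']
    intro p hp
    have h1 : (∫ x in E, w p x) = 0 := congrArg Prod.fst hp
    have h2 : (∫ x in E, w p x • x) = 0 := congrArg Prod.snd hp
    have hsq : (∫ x in E, (w p x) ^ 2) = 0 := by
      have hpt : ∀ x : EuclideanSpace ℝ (Fin d), (w p x) ^ 2 = p.1 * w p x + inner ℝ p.2 (w p x • x) := by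
        intro x; simp only [hw, real_inner_smul_right]; ring
      calc (∫ x in E, (w p x) ^ 2)
          = ∫ x in E, (p.1 * w p x + inner ℝ p.2 (w p x • x)) := by simp only [hpt]
        _ = (∫ x in E, p.1 * w p x) + ∫ x in E, (inner ℝ p.2 (w p x • x) : ℝ) :=
            integral_add ((hint1 p).const_mul _)
              (hint _ (Continuous.inner continuous_const ((hwc p).smul continuous_id)))
        _ = p.1 * (∫ x in E, w p x) + inner ℝ p.2 (∫ x in E, w p x • x) := by
            rw [integral_const_mul, integral_inner (hint2 p)]
        _ = 0 := by rw [h1, h2, inner_zero_right]; ring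
    have hae := (integral_eq_zero_iff_of_nonneg (f := fun x => (w p x) ^ 2)
      (fun x => sq_nonneg _) (hint _ ((hwc p).pow 2))).mp hsq
    have hzero : ∀ x ∈ E, w p x = 0 := by
      by_contra hcon
      push_neg at hcon
      obtain ⟨x₀, hx₀E, hx₀⟩ := hcon
      set U : Set (EuclideanSpace ℝ (Fin d)) := E ∩ (w p) ⁻¹' {0}ᶜ with hU
      have hUopen : IsOpen U := hE.inter (isOpen_compl_singleton.preimage (hwc p))
      have hUne : x₀ ∈ U := ⟨hx₀E, hx₀⟩
      have hpos : 0 < volume U := hUopen.measure_pos volume ⟨x₀, hUne⟩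
      have hsub : U ⊆ {x | ¬ (w p x) ^ 2 = 0} := by
        intro x hx
        simp only [Set.mem_setOf_eq]
        exact pow_ne_zero 2 hx.2
      have hae0 : volume.restrict E {x | ¬ (w p x) ^ 2 = 0} = 0 := by
        have h := hae
        rw [Filter.EventuallyEq, ae_iff] at h
        simpa using h
      have hle : volume.restrict E U ≤ 0 := by
        rw [← hae0]; exact measure_mono hsub
      rw [Measure.restrict_apply hUopen.measurableSet] at hle
      have hUE : U ∩ E = U := Set.inter_eq_self_of_subset_left Set.inter_subset_left
      rw [hUE] at hle
      exact absurd (le_antisymm hle zero_le) hpos.ne'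
    obtain ⟨x₀, hx₀⟩ := hne
    obtain ⟨ε, hε, hball⟩ := Metric.isOpen_iff.mp hE x₀ hx₀
    have hξ : p.2 = 0 := by
      by_contra hξne
      have hn : (0 : ℝ) < ‖p.2‖ := norm_pos_iff.mpr hξne
      set t : ℝ := ε / (2 * ‖p.2‖) with ht'
      have ht : 0 < t := div_pos hε (by positivity)
      have hmem : x₀ + t • p.2 ∈ E := by
        apply hball
        rw [Metric.mem_ball, dist_eq_norm]
        have : x₀ + t • p.2 - x₀ = t • p.2 := by abel
        rw [this, norm_smul, Real.norm_eq_abs, abs_of_pos ht, ht']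
        have hlt : ε / (2 * ‖p.2‖) * ‖p.2‖ = ε / 2 := by
          field_simp
        rw [hlt]
        linarith
      have h0 := hzero _ hmem
      have h0' := hzero _ hx₀
      have hexp : w p (x₀ + t • p.2) = w p x₀ + t * ‖p.2‖ ^ 2 := by
        simp only [hw, inner_add_right, real_inner_smul_right, real_inner_self_eq_norm_sq]; ring
      rw [hexp, h0'] at h0
      have hpos2 := mul_pos ht (pow_pos hn 2)
      linarith
    have ha : p.1 = 0 := by
      have := hzero _ hx₀
      rw [hw] at this
      simp [hξ] at this
      exact this
    exact Prod.ext ha hξ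
  have hsurj : Function.Surjective T := (LinearMap.injective_iff_surjective).mp hinj
  obtain ⟨p, hp⟩ := hsurj ((volume E).toReal, (volume E).toReal • xE)
  exact ⟨p.1, p.2, congrArg Prod.fst hp, congrArg Prod.snd hp⟩
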